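/- arXiv:0706.4247 — 9 statements merged into one kernel-verified Lean document; each statement's English description precedes it below -/
import Mathlib

section
/- If H₁ is a virtual retract of G₁ and H₂ is a virtual retract of G₂, then H₁ × H₂ is a virtual retract of G₁ × G₂. -/
def IsVirtualRetract {G : Type*} [Group G] (H : Subgroup G) : Prop :=
  ∃ V : Subgroup G, V.FiniteIndex ∧ H ≤ V ∧
    ∃ ρ : V →* G, (∀ v : V, ρ v ∈ H) ∧ (∀ v : V, (v : G) ∈ H → ρ v = v)

theorem stmt4 {G₁ G₂ : Type*} [Group G₁] [Group G₂] (H₁ : Subgroup G₁) (H₂ : Subgroup G₂)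
    (h₁ : IsVirtualRetract H₁) (h₂ : IsVirtualRetract H₂) :
    IsVirtualRetract (H₁.prod H₂) := by
  obtain ⟨V₁, hfi₁, hle₁, ρ₁, hmem₁, hid₁⟩ := h₁
  obtain ⟨V₂, hfi₂, hle₂, ρ₂, hmem₂, hid₂⟩ := h₂
  refine ⟨V₁.prod V₂, ⟨?_⟩, fun x hx => ⟨hle₁ hx.1, hle₂ hx.2⟩, ?_⟩
  · rw [Subgroup.index_prod]
    exact Nat.mul_ne_zero hfi₁.index_ne_zero hfi₂.index_ne_zero
  · refine ⟨MonoidHom.mk' (fun v => (ρ₁ ⟨v.1.1, v.2.1⟩, ρ₂ ⟨v.1.2, v.2.2⟩)) ?_, ?_, ?_⟩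
    · intro a b
      ext
      · exact map_mul ρ₁ ⟨a.1.1, a.2.1⟩ ⟨b.1.1, b.2.1⟩
      · exact map_mul ρ₂ ⟨a.1.2, a.2.2⟩ ⟨b.1.2, b.2.2⟩
    · intro v
      exact ⟨hmem₁ _, hmem₂ _⟩
    · intro v hv
      ext
      · exact hid₁ _ hv.1
      · exact hid₂ _ hv.2
end

section
/- Let G be a group, K a virtual retract of G, and H a subgroup of K. If H is a virtual retract of K then H is a virtual retract of G. -/
theorem stmt5 {G : Type*} [Group G] (K H : Subgroup G) (hHK : H ≤ K)
    (hK : IsVirtualRetract K) (hH : IsVirtualRetract (H.subgroupOf K)) :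
    IsVirtualRetract H := by
  obtain ⟨V, hVfi, hKV, ρ, hρK, hρid⟩ := hK
  obtain ⟨W, hWfi, hHW, σ, hσH, hσid⟩ := hH
  set W' : Subgroup G := W.map K.subtype with hW'def
  set W'' : Subgroup V := W'.comap ρ with hW''def
  set U : Subgroup G := W''.map V.subtype with hUdef
  have hUV : U ≤ V := Subgroup.map_subtype_le _
  have hW'K : W' ≤ K := Subgroup.map_subtype_le _
  have hUmem : ∀ (u : G) (hu : u ∈ U) (hv : u ∈ V), ρ ⟨u, hv⟩ ∈ W' := by
    intro u hu hv
    obtain ⟨x, hx, hxu⟩ := hu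
    have hxe : x = ⟨u, hv⟩ := Subtype.ext hxu
    rwa [hxe] at hx
  have hWmem : ∀ (g : G) (hg : g ∈ W'), (⟨g, hW'K hg⟩ : K) ∈ W := by
    intro g hg
    obtain ⟨x, hx, rfl⟩ := hg
    have he : (⟨K.subtype x, hW'K ⟨x, hx, rfl⟩⟩ : K) = x := Subtype.ext rfl
    rwa [← he] at hx
  have key : ∀ u : U, ρ ⟨(u : G), hUV u.2⟩ ∈ W' := fun u => hUmem u u.2 _
  let g : U → W := fun u => ⟨⟨ρ ⟨(u : G), hUV u.2⟩, hW'K (key u)⟩, hWmem _ (key u)⟩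
  have hg : ∀ u v : U, g (u * v) = g u * g v := by
    intro u v
    apply Subtype.ext; apply Subtype.ext
    show (ρ ⟨((u * v : U) : G), _⟩ : G) = ρ ⟨(u : G), _⟩ * ρ ⟨(v : G), _⟩
    rw [← map_mul]
    rfl
  refine ⟨U, ?_, ?_, MonoidHom.mk' (fun u => ((σ (g u) : K) : G)) ?_, ?_, ?_⟩
  · -- finite index
    constructor
    have hrange : ρ.range ≤ K := by rintro _ ⟨v, rfl⟩; exact hρK v
    have hW'relK : W'.relIndex K ≠ 0 := by
      have : W'.subgroupOf K = W := by
        rw [hW'def, Subgroup.subgroupOf,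
          Subgroup.comap_map_eq_self_of_injective K.subtype_injective]
      rw [Subgroup.relIndex, this]
      exact hWfi.index_ne_zero
    have hW'' : W''.index ≠ 0 := by
      rw [hW''def, Subgroup.index_comap]
      intro h0
      exact hW'relK (Subgroup.relIndex_eq_zero_of_le_right hrange h0)
    rw [hUdef, Subgroup.index_map_subtype]
    exact mul_ne_zero hW'' hVfi.index_ne_zero
  · -- H ≤ U
    intro h hh
    have hhK : h ∈ K := hHK hh
    have hhV : h ∈ V := hKV hhK
    have hW'h : h ∈ W' := by
      refine ⟨⟨h, hhK⟩, hHW ?_, rfl⟩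
      exact hh
    have : (⟨h, hhV⟩ : V) ∈ W'' := by
      show ρ ⟨h, hhV⟩ ∈ W'
      rwa [hρid ⟨h, hhV⟩ hhK]
    exact ⟨⟨h, hhV⟩, this, rfl⟩
  · -- map_mul
    intro u v
    show ((σ (g (u * v)) : K) : G) = ((σ (g u) : K) : G) * ((σ (g v) : K) : G)
    rw [hg, map_mul]
    rfl
  · -- lands in H
    intro u
    have := hσH (g u)
    rwa [Subgroup.mem_subgroupOf] at this
  · -- identity on H
    intro u hu
    have h1 : (ρ ⟨(u : G), hUV u.2⟩ : G) = (u : G) := hρid _ (hHK hu)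
    have h2 : ((g u : K) : G) ∈ H := by
      show (ρ ⟨(u : G), hUV u.2⟩ : G) ∈ H
      rw [h1]; exact hu
    have h3 : σ (g u) = (g u : K) := by
      apply hσid
      rwa [Subgroup.mem_subgroupOf]
    show ((σ (g u) : K) : G) = (u : G)
    rw [h3]
    exact h1
end

section
/- Let G be a group and K a virtual retract of G. If a subgroup H of K is separable in K, and K itself is separable in G, then H is separable in G. -/
def SubgroupSeparable {G : Type*} [Group G] (H : Subgroup G) : Prop :=
  ∀ g : G, g ∉ H → ∃ K : Subgroup G, K.FiniteIndex ∧ H ≤ K ∧ g ∉ K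

theorem stmt6 {G : Type*} [Group G] (K H : Subgroup G) (hHK : H ≤ K)
    (hK : IsVirtualRetract K) (hKsep : SubgroupSeparable K)
    (hH : SubgroupSeparable (H.subgroupOf K)) :
    SubgroupSeparable H := by
  intro g hg
  by_cases hgK : g ∈ K
  · -- use the relative separability plus the retraction
    obtain ⟨V, hVfi, hKV, ρ, hρK, hρid⟩ := hK
    obtain ⟨M, hMfi, hHM, hgM⟩ := hH ⟨g, hgK⟩ (by simpa [Subgroup.mem_subgroupOf] using hg)
    set M' : Subgroup G := M.map K.subtype with hM'
    set S : Subgroup V := M'.comap ρ with hS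
    refine ⟨S.map V.subtype, ?_, ?_, ?_⟩
    · -- finite index
      constructor
      rw [Subgroup.index_map]
      have hker : (V.subtype).ker = ⊥ := V.ker_subtype
      have hrange : (V.subtype).range = V := V.range_subtype
      rw [hker, hrange, sup_bot_eq]
      apply mul_ne_zero
      · -- S has finite index in V
        rw [hS, Subgroup.index_comap]
        intro h0
        have hle : ρ.range ≤ K := by
          rintro x ⟨v, rfl⟩; exact hρK v
        have : M'.relIndex K = 0 := Subgroup.relIndex_eq_zero_of_le_right hle h0
        have hMK : M'.relIndex K = M.index := by
          rw [Subgroup.relIndex, Subgroup.subgroupOf, hM',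
            Subgroup.comap_map_eq_self_of_injective K.subtype_injective]
        rw [hMK] at this
        exact hMfi.index_ne_zero this
      · exact hVfi.index_ne_zero
    · -- H ≤ image
      intro h hh
      have hhK : h ∈ K := hHK hh
      have hhV : h ∈ V := hKV hhK
      refine ⟨⟨h, hhV⟩, ?_, rfl⟩
      show ρ ⟨h, hhV⟩ ∈ M'
      rw [hρid ⟨h, hhV⟩ hhK]
      exact ⟨⟨h, hhK⟩, hHM (by simpa [Subgroup.mem_subgroupOf] using hh), rfl⟩
    · -- g not in image
      rintro ⟨v, hvS, hv⟩
      have hgV : g ∈ V := hKV hgK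
      have hveq : v = ⟨g, hgV⟩ := Subtype.ext hv
      rw [hveq] at hvS
      have : ρ ⟨g, hgV⟩ ∈ M' := hvS
      rw [hρid ⟨g, hgV⟩ hgK] at this
      obtain ⟨m, hm, hmeq⟩ := this
      have : m = ⟨g, hgK⟩ := Subtype.ext hmeq
      exact hgM (this ▸ hm)
  · obtain ⟨L, hLfi, hKL, hgL⟩ := hKsep g hgK
    exact ⟨L, hLfi, hHK.trans hKL, hgL⟩
end

section
/- Every virtual retract of a residually finite group is a separable subgroup. -/
def ResiduallyFinite (G : Type*) [Group G] : Prop :=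
  ∀ g : G, g ≠ 1 → ∃ (Q : Type) (_ : Group Q) (_ : Finite Q) (φ : G →* Q), φ g ≠ 1

theorem stmt7 {G : Type*} [Group G] (hG : ResiduallyFinite G) (H : Subgroup G)
    (hH : IsVirtualRetract H) : SubgroupSeparable H := by
  obtain ⟨V, hVfi, hHV, ρ, hρH, hρid⟩ := hH
  intro g hg
  by_cases hgV : g ∈ V
  · -- g ∈ V, use the retraction
    set gv : V := ⟨g, hgV⟩
    have hne : (ρ gv)⁻¹ * g ≠ 1 := by
      intro h
      apply hg
      have : ρ gv = g := inv_mul_eq_one.mp h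
      rw [← this]; exact hρH gv
    obtain ⟨Q, _, _, φ, hφ⟩ := hG _ hne
    have hφne : φ (ρ gv) ≠ φ g := by
      intro h
      apply hφ
      simp [map_mul, map_inv, h]
    -- the equalizer subgroup
    set E : Subgroup V := MonoidHom.eqLocus (φ.comp ρ) (φ.comp V.subtype) with hE
    refine ⟨E.map V.subtype, ?_, ?_, ?_⟩
    · -- finite index
      constructor
      rw [Subgroup.index_map_subtype]
      have hEV : E.index ≠ 0 := by
        set ψ : V →* Q × Q := (φ.comp ρ).prod (φ.comp V.subtype) with hψ
        set Δ : Subgroup (Q × Q) := ((MonoidHom.id Q).prod (MonoidHom.id Q)).range with hΔ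
        have hcomap : E = Δ.comap ψ := by
          ext x
          constructor
          · intro h
            have h' : (φ.comp ρ) x = (φ.comp V.subtype) x := h
            exact ⟨(φ.comp V.subtype) x, by simp [hψ, h', MonoidHom.prod_apply]⟩
          · rintro ⟨q, hq⟩
            have h1 : q = (φ.comp ρ) x := congrArg Prod.fst hq
            have h2 : q = (φ.comp V.subtype) x := congrArg Prod.snd hq
            show (φ.comp ρ) x = (φ.comp V.subtype) x
            rw [← h1, ← h2]
        rw [hcomap, Subgroup.index_comap, Subgroup.relIndex]
        exact Subgroup.index_ne_zero_of_finite
      exact Nat.mul_ne_zero hEV hVfi.index_ne_zero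
    · -- H ≤ K
      intro h hh
      have hhV : h ∈ V := hHV hh
      refine ⟨⟨h, hhV⟩, ?_, rfl⟩
      show φ (ρ ⟨h, hhV⟩) = φ (V.subtype ⟨h, hhV⟩)
      rw [hρid ⟨h, hhV⟩ hh]; rfl
    · -- g ∉ K
      rintro ⟨x, hx, hxg⟩
      have hx' : φ (ρ x) = φ (V.subtype x) := hx
      apply hφne
      have : x = gv := Subtype.ext hxg
      rw [this] at hx'
      simpa using hx'
  · exact ⟨V, hVfi, hHV, hgV⟩
end

section
/- Let G₁, ..., Gₙ be groups each having property LR (every finitely generated subgroup is a virtual retract), let G = G₁ × ⋯ × Gₙ, let H ≤ G be finitely generated, and let Ĥ = π₁(H) × ⋯ × πₙ(H) where πᵢ is projection to Gᵢ. Then H is a virtual retract of G if and only if H is a virtual retract of Ĥ. -/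
def PropertyLR (Q : Type*) [Group Q] : Prop :=
  ∀ K : Subgroup Q, K.FG → IsVirtualRetract K

/-- Finitely generated subgroups map to finitely generated subgroups. -/
lemma Subgroup.FG.map' {G N : Type*} [Group G] [Group N] {H : Subgroup G} (h : H.FG)
    (f : G →* N) : (H.map f).FG := by
  obtain ⟨S, hS, hfin⟩ := (Subgroup.fg_iff H).mp h
  exact (Subgroup.fg_iff _).mpr ⟨f '' S, by rw [← hS, MonoidHom.map_closure], hfin.image f⟩

/-- If `H` is a virtual retract of `G` and `H ≤ K`, then `H` is a virtual retract of `K`. -/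
lemma IsVirtualRetract.subgroupOf {G : Type*} [Group G] {H K : Subgroup G}
    (hvr : IsVirtualRetract H) (hHK : H ≤ K) :
    IsVirtualRetract (H.subgroupOf K) := by
  obtain ⟨V, hVfi, hHV, ρ, hρH, hρfix⟩ := hvr
  haveI := hVfi
  refine ⟨V.subgroupOf K, inferInstance, ?_, ?_⟩
  · intro x hx
    exact hHV hx
  · -- inclusion from V.subgroupOf K to V
    let j : (V.subgroupOf K) →* V :=
      { toFun := fun v => ⟨(v : K), v.2⟩
        map_one' := rfl
        map_mul' := fun _ _ => rfl }
    refine ⟨MonoidHom.codRestrict (ρ.comp j) K (fun v => hHK (hρH (j v))), ?_, ?_⟩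
    · intro v
      exact hρH (j v)
    · intro v hv
      apply Subtype.ext
      have : ((j v : G)) ∈ H := hv
      exact hρfix (j v) this

/-- Transitivity: if `K` is a virtual retract of `G` and `H.subgroupOf K` is a virtual
retract of `K`, with `H ≤ K`, then `H` is a virtual retract of `G`. -/
lemma IsVirtualRetract.trans {G : Type*} [Group G] {H K : Subgroup G} (hHK : H ≤ K)
    (hK : IsVirtualRetract K) (hHsub : IsVirtualRetract (H.subgroupOf K)) :
    IsVirtualRetract H := by
  obtain ⟨W, hWfi, hKW, ρ, hρK, hρfix⟩ := hK
  obtain ⟨V, hVfi, hHV, σ, hσH, hσfix⟩ := hHsub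
  haveI := hWfi
  haveI := hVfi
  -- restrict ρ to land in K
  let r : W →* K := MonoidHom.codRestrict ρ K hρK
  -- the finite-index subgroup of G
  let U : Subgroup G := (V.comap r).map W.subtype
  have hmemW : ∀ g : G, g ∈ U → g ∈ W := by
    intro g hg
    obtain ⟨w, _, rfl⟩ := hg
    exact w.2
  have hmemV : ∀ (g : G) (hg : g ∈ U), r ⟨g, hmemW g hg⟩ ∈ V := by
    intro g hg
    obtain ⟨w, hw, rfl⟩ := hg
    exact hw
  have hUfi : U.FiniteIndex := by
    constructor
    rw [Subgroup.index_map]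
    have h1 : ((V.comap r) ⊔ W.subtype.ker).index ≠ 0 := by
      have : (V.comap r).FiniteIndex := by
        constructor
        rw [Subgroup.index_comap]
        have := Subgroup.instFiniteIndex_subgroupOf V r.range
        exact this.index_ne_zero
      exact (Subgroup.finiteIndex_of_le le_sup_left).index_ne_zero
    have h2 : W.subtype.range.index ≠ 0 := by
      rw [Subgroup.range_subtype]
      exact hWfi.index_ne_zero
    exact mul_ne_zero h1 h2
  have hHU : H ≤ U := by
    intro h hh
    have hhW : h ∈ W := hKW (hHK hh)
    refine ⟨⟨h, hhW⟩, ?_, rfl⟩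
    have : ρ ⟨h, hhW⟩ = h := hρfix ⟨h, hhW⟩ (hHK hh)
    have hr : r ⟨h, hhW⟩ = ⟨h, hHK hh⟩ := Subtype.ext this
    show r ⟨h, hhW⟩ ∈ V
    rw [hr]
    exact hHV hh
  -- build the retraction
  let j : U →* W :=
    { toFun := fun u => ⟨(u : G), hmemW u u.2⟩
      map_one' := rfl
      map_mul' := fun _ _ => rfl }
  let s : U →* V := MonoidHom.codRestrict (r.comp j) V (fun u => hmemV u u.2)
  let τ : U →* G := K.subtype.comp (σ.comp s)
  refine ⟨U, hUfi, hHU, τ, ?_, ?_⟩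
  · intro u
    exact hσH (s u)
  · intro u hu
    have huK : (u : G) ∈ K := hHK hu
    have h1 : ρ (j u) = u := hρfix (j u) huK
    have h2 : (s u : K) = ⟨(u : G), huK⟩ := Subtype.ext h1
    have h3 : ((s u : K) : G) ∈ H := by rw [h2]; exact hu
    have h4 : σ (s u) = (s u : K) := hσfix (s u) h3
    show (σ (s u) : G) = u
    rw [h4, h2]

theorem stmt10 {n : ℕ} (G : Fin n → Type*) [∀ i, Group (G i)]
    (hLR : ∀ i, PropertyLR (G i))
    (H : Subgroup (∀ i, G i)) (hH : H.FG) :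
    IsVirtualRetract H ↔
      IsVirtualRetract
        (H.subgroupOf (Subgroup.pi Set.univ (fun i => H.map (Pi.evalMonoidHom G i)))) := by
  set K : ∀ i, Subgroup (G i) := fun i => H.map (Pi.evalMonoidHom G i) with hKdef
  set Hhat : Subgroup (∀ i, G i) := Subgroup.pi Set.univ K with hHhatdef
  have hHle : H ≤ Hhat := by
    intro h hh i _
    exact ⟨h, hh, rfl⟩
  constructor
  · intro hvr
    exact hvr.subgroupOf hHle
  · intro hvr
    -- Hhat is a virtual retract of G, using LR of each factor
    have hKfg : ∀ i, (K i).FG := fun i => hH.map' _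
    have hKvr : ∀ i, IsVirtualRetract (K i) := fun i => hLR i (K i) (hKfg i)
    choose V hVfi hKV ρ hρK hρfix using hKvr
    have hHhatVR : IsVirtualRetract Hhat := by
      refine ⟨Subgroup.pi Set.univ V, ?_, ?_, ?_⟩
      · have hpi : Subgroup.pi Set.univ V =
            ⨅ i, (V i).comap (Pi.evalMonoidHom G i) := by
          ext g
          simp [Subgroup.mem_pi, Subgroup.mem_iInf]
        rw [hpi]
        apply Subgroup.finiteIndex_iInf
        intro i
        constructor
        rw [Subgroup.index_comap_of_surjective]
        · exact (hVfi i).index_ne_zero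
        · intro x
          exact ⟨Function.update 1 i x, by simp⟩
      · intro g hg i _
        exact hKV i (hg i trivial)
      · refine ⟨{ toFun := fun w i => ρ i ⟨w.1 i, w.2 i trivial⟩
                  map_one' := by funext i; exact map_one (ρ i)
                  map_mul' := by
                    intro a b
                    funext i
                    exact map_mul (ρ i) ⟨a.1 i, a.2 i trivial⟩ ⟨b.1 i, b.2 i trivial⟩ }, ?_, ?_⟩
        · intro w i _
          exact hρK i _
        · intro w hw
          funext i
          exact hρfix i ⟨w.1 i, w.2 i trivial⟩ (hw i trivial)
    exact IsVirtualRetract.trans hHle hHhatVR hvr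
end

section
/- Let G₁, ..., Gₙ be groups in which every finitely generated subgroup is both separable and a virtual retract, let G = G₁ × ⋯ × Gₙ, let H ≤ G be finitely generated, and let Ĥ = π₁(H) × ⋯ × πₙ(H). Then H is separable in G if and only if H is separable in Ĥ. -/
private lemma fg_map' {G G' : Type*} [Group G] [Group G'] (f : G →* G') {S : Subgroup G}
    (hS : S.FG) : (S.map f).FG := by
  classical
  obtain ⟨T, hT⟩ := hS
  exact ⟨T.image f, by simp [← hT, MonoidHom.map_closure]⟩

private lemma sep_subgroupOf {G : Type*} [Group G] {H M : Subgroup G}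
    (hs : SubgroupSeparable H) : SubgroupSeparable (H.subgroupOf M) := by
  intro g hg
  obtain ⟨K, hKfi, hHK, hgK⟩ := hs g (by simpa [Subgroup.mem_subgroupOf] using hg)
  exact ⟨K.subgroupOf M, Subgroup.instFiniteIndex_subgroupOf K M,
    fun x hx => hHK hx, by simpa [Subgroup.mem_subgroupOf] using hgK⟩

theorem stmt11 {n : ℕ} (G : Fin n → Type*) [∀ i, Group (G i)]
    (hsep : ∀ i, ∀ K : Subgroup (G i), K.FG → SubgroupSeparable K)
    (hvr : ∀ i, ∀ K : Subgroup (G i), K.FG → IsVirtualRetract K)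
    (H : Subgroup (∀ i, G i)) (hH : H.FG) :
    SubgroupSeparable H ↔
      SubgroupSeparable
        (H.subgroupOf (Subgroup.pi Set.univ (fun i => H.map (Pi.evalMonoidHom G i)))) := by
  set Hi : ∀ i, Subgroup (G i) := fun i => H.map (Pi.evalMonoidHom G i) with hHi
  set Hhat : Subgroup (∀ i, G i) := Subgroup.pi Set.univ Hi with hHhat
  have hHsub : H ≤ Hhat := fun h hh => fun i _ => ⟨h, hh, rfl⟩
  have hHifg : ∀ i, (Hi i).FG := fun i => fg_map' _ hH
  constructor
  · exact fun hs => sep_subgroupOf hs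
  · intro hs g hg
    by_cases hgH : g ∈ Hhat
    · -- g ∈ Hhat : use separability in Hhat plus virtual retraction
      obtain ⟨L, hLfi, hHL, hgL⟩ := hs ⟨g, hgH⟩ (by simpa [Subgroup.mem_subgroupOf] using hg)
      -- virtual retracts in each coordinate
      choose V hVfi hHiV ρ hρmem hρfix using fun i => hvr i (Hi i) (hHifg i)
      set Vp : Subgroup (∀ i, G i) := Subgroup.pi Set.univ V with hVp
      have hVpfi : Vp.FiniteIndex := by
        have : Vp = ⨅ i, (V i).comap (Pi.evalMonoidHom G i) := by
          ext x; simp [hVp, Subgroup.mem_pi, Subgroup.mem_iInf]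
        rw [this]
        refine Subgroup.finiteIndex_iInf fun i => ⟨?_⟩
        rw [(V i).index_comap_of_surjective (f := Pi.evalMonoidHom G i)
          (Function.surjective_eval i)]
        exact (hVfi i).1
      -- the retraction onto Hhat
      have hmem : ∀ (v : Vp) (i : Fin n), (v : ∀ i, G i) i ∈ V i := fun v i => v.2 i trivial
      let ρp : Vp →* (∀ i, G i) :=
        { toFun := fun v => fun i => ρ i ⟨(v : ∀ i, G i) i, hmem v i⟩
          map_one' := by
            funext i
            exact map_one (ρ i)
          map_mul' := by
            intro a b
            funext i
            exact map_mul (ρ i) ⟨(a : ∀ i, G i) i, hmem a i⟩ ⟨(b : ∀ i, G i) i, hmem b i⟩ }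
      have hρprange : ∀ v : Vp, ρp v ∈ Hhat := fun v => fun i _ => hρmem i _
      have hρpfix : ∀ v : Vp, (v : ∀ i, G i) ∈ Hhat → ρp v = (v : ∀ i, G i) := by
        intro v hv
        funext i
        exact hρfix i _ (hv i trivial)
      let ρ' : Vp →* Hhat := ρp.codRestrict Hhat hρprange
      -- the final subgroup
      refine ⟨(L.comap ρ').map Vp.subtype, ?_, ?_, ?_⟩
      · constructor
        have h1 : ((L.comap ρ').map Vp.subtype).relIndex Vp * Vp.index
            = ((L.comap ρ').map Vp.subtype).index :=
          Subgroup.relIndex_mul_index (Subgroup.map_subtype_le _)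
        have h2 : ((L.comap ρ').map Vp.subtype).subgroupOf Vp = L.comap ρ' :=
          Subgroup.comap_map_eq_self_of_injective Vp.subtype_injective _
        have h3 : (L.comap ρ').index ≠ 0 := by
          rw [Subgroup.index_comap]
          exact (Subgroup.instFiniteIndex_subgroupOf L ρ'.range).1
        rw [← h1]
        refine mul_ne_zero ?_ hVpfi.1
        rw [Subgroup.relIndex, h2]
        exact h3
      · -- H ≤ K
        intro h hh
        have hhV : h ∈ Vp := fun i _ => hHiV i ⟨h, hh, rfl⟩
        refine ⟨⟨h, hhV⟩, ?_, rfl⟩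
        have : ρ' ⟨h, hhV⟩ = ⟨h, hHsub hh⟩ := by
          apply Subtype.ext
          exact hρpfix ⟨h, hhV⟩ (hHsub hh)
        show ρ' ⟨h, hhV⟩ ∈ L
        rw [this]
        exact hHL (by simpa [Subgroup.mem_subgroupOf] using hh)
      · -- g ∉ K
        rintro ⟨y, hy, hyg⟩
        apply hgL
        have hyfix : ρ' y = ⟨g, hgH⟩ := by
          apply Subtype.ext
          rw [show ((⟨g, hgH⟩ : Hhat) : ∀ i, G i) = (y : ∀ i, G i) from hyg.symm]
          refine hρpfix y ?_
          rw [show ((y : ∀ i, G i)) = g from hyg]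
          exact hgH
        rw [← hyfix]
        exact hy
    · -- g ∉ Hhat : some coordinate of g escapes Hi i, use separability in G i
      rw [hHhat, Subgroup.mem_pi] at hgH
      push_neg at hgH
      obtain ⟨i, -, hgi⟩ := hgH
      obtain ⟨K, hKfi, hHiK, hgK⟩ := hsep i (Hi i) (hHifg i) (g i) hgi
      refine ⟨K.comap (Pi.evalMonoidHom G i), ?_, ?_, ?_⟩
      · constructor
        rw [K.index_comap_of_surjective (f := Pi.evalMonoidHom G i) (Function.surjective_eval i)]
        exact hKfi.1
      · exact fun h hh => hHiK ⟨h, hh, rfl⟩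
      · exact hgK
end

section
/- Let I be a subgroup of a direct product Λ × B where Λ is a group, such that I is finitely generated and I ∩ Λ (identifying Λ with Λ × {1}) has finite index in Λ. Then the intersection S = I ∩ B (identifying B with {1} × B) is finitely generated. -/
theorem subgroupFG_map {G H : Type*} [Group G] [Group H] {P : Subgroup G} (h : P.FG)
    (f : G →* H) : (P.map f).FG := by
  classical
  obtain ⟨S, rfl⟩ := h
  exact ⟨S.image f, by rw [Finset.coe_image, MonoidHom.map_closure]⟩

theorem stmt12 {Λ B : Type*} [Group Λ] [Group B] (I : Subgroup (Λ × B))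
    (hfg : I.FG) (hfi : (I.comap (MonoidHom.inl Λ B)).FiniteIndex) :
    (I.comap (MonoidHom.inr Λ B)).FG := by
  set K : Subgroup Λ := I.comap (MonoidHom.inl Λ B) with hK
  set J : Subgroup (Λ × B) := I ⊓ K.comap (MonoidHom.fst Λ B) with hJ
  have hKfi : (K.comap (MonoidHom.fst Λ B)).FiniteIndex := by
    constructor
    rw [Subgroup.index_comap_of_surjective _ Prod.fst_surjective]
    exact hfi.index_ne_zero
  have hJle : J ≤ I := inf_le_left
  haveI hIfg : Group.FG I := (Group.fg_iff_subgroup_fg I).2 hfg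
  have : (J.subgroupOf I).FiniteIndex := by
    rw [hJ, Subgroup.inf_subgroupOf_left]
    infer_instance
  have hJfg : J.FG := (Group.fg_iff_subgroup_fg J).1 <|
    Group.fg_of_surjective (f := (Subgroup.subgroupOfEquivOfLe hJle).toMonoidHom)
      (Subgroup.subgroupOfEquivOfLe hJle).surjective
  have hS : I.comap (MonoidHom.inr Λ B) = J.map (MonoidHom.snd Λ B) := by
    ext b
    simp only [Subgroup.mem_comap, Subgroup.mem_map,  MonoidHom.coe_snd,
      hJ, Subgroup.mem_inf, hK]
    constructor
    · intro hb
      refine ⟨(1, b), ⟨hb, ?_⟩, rfl⟩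
      exact I.one_mem
    · rintro ⟨⟨a, b'⟩, ⟨hI, hKa⟩, rfl⟩
      have hK' : ((a, 1) : Λ × B) ∈ I := hKa
      have := I.mul_mem (I.inv_mem hK') hI
      simpa using this
  rw [hS]
  exact subgroupFG_map hJfg _
end

section
/- Let G = A × B be a direct product of groups with A residually finite, and let H ≤ G be a subgroup on which the projection q : G → B is injective, with inverse ι : q(H) → H. Then for every g ∈ A × q(H) with g ∉ H, there exists a finite-index subgroup V of A × q(H) containing H but not g. -/
theorem stmt14 {A B : Type*} [Group A] [Group B] (hA : ResiduallyFinite A)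
    (H : Subgroup (A × B))
    (hinj : ∀ x ∈ H, ∀ y ∈ H, (x : A × B).2 = (y : A × B).2 → x = y)
    (g : A × B) (hg : g ∈ (⊤ : Subgroup A).prod (H.map (MonoidHom.snd A B)))
    (hgH : g ∉ H) :
    ∃ V : Subgroup (A × B),
      V ≤ (⊤ : Subgroup A).prod (H.map (MonoidHom.snd A B)) ∧
      (V.subgroupOf ((⊤ : Subgroup A).prod (H.map (MonoidHom.snd A B)))).FiniteIndex ∧
      H ≤ V ∧ g ∉ V := by
  classical
  set P : Subgroup (A × B) := (⊤ : Subgroup A).prod (H.map (MonoidHom.snd A B)) with hP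
  -- extract the witness h₀ ∈ H with h₀.2 = g.2
  obtain ⟨-, h₀, hh₀H, hh₀2⟩ := (Subgroup.mem_prod.mp hg)
  have hne : g.1 * h₀.1⁻¹ ≠ 1 := by
    intro h
    have h1 : g.1 = h₀.1 := mul_inv_eq_one.mp h
    have h2 : g = h₀ := Prod.ext h1 hh₀2.symm
    exact hgH (show g ∈ H from h2 ▸ hh₀H)
  obtain ⟨Q, _, _, φ, hφ⟩ := hA _ hne
  have hφne : φ g.1 ≠ φ h₀.1 := by
    intro h; exact hφ (by simp [map_mul, map_inv, h])
  -- the subgroup V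
  let V : Subgroup (A × B) :=
    { carrier := {x | ∃ h ∈ H, h.2 = x.2 ∧ φ x.1 = φ h.1}
      one_mem' := ⟨1, H.one_mem, rfl, rfl⟩
      mul_mem' := by
        rintro x y ⟨h, hh, hh2, hhφ⟩ ⟨k, hk, hk2, hkφ⟩
        exact ⟨h * k, H.mul_mem hh hk, by simp [Prod.snd_mul, hh2, hk2],
          by simp [Prod.fst_mul, map_mul, hhφ, hkφ]⟩
      inv_mem' := by
        rintro x ⟨h, hh, hh2, hhφ⟩
        exact ⟨h⁻¹, H.inv_mem hh, by simp [Prod.snd_inv, hh2],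
          by simp [Prod.fst_inv, map_inv, hhφ]⟩ }
  have hVle : V ≤ P := by
    rintro x ⟨h, hh, hh2, -⟩
    exact Subgroup.mem_prod.mpr ⟨Subgroup.mem_top _, ⟨h, hh, hh2⟩⟩
  have hHle : H ≤ V := fun h hh => ⟨h, hh, rfl, rfl⟩
  have hgV : g ∉ V := by
    rintro ⟨h, hh, hh2, hhφ⟩
    have : h = h₀ := hinj _ hh _ hh₀H (hh2.trans hh₀2.symm)
    exact hφne (this ▸ hhφ)
  refine ⟨V, hVle, ?_, hHle, hgV⟩
  -- finite index: V.subgroupOf P is the comap of the diagonal under ψ : P →* Q × Q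
  have hrep : ∀ p : ↥P, ∃ h : A × B, h ∈ H ∧ h.2 = (p : A × B).2 := by
    intro p
    obtain ⟨-, h, hh, hh2⟩ := (Subgroup.mem_prod.mp p.2)
    exact ⟨h, hh, hh2⟩
  choose r hrH hr2 using hrep
  have rmul : ∀ p q : ↥P, r (p * q) = r p * r q := by
    intro p q
    refine hinj _ (hrH _) _ (H.mul_mem (hrH p) (hrH q)) ?_
    simp [hr2, Prod.snd_mul, Subgroup.coe_mul]
  let ψ : ↥P →* Q × Q :=
    { toFun := fun p => (φ (p : A × B).1, φ (r p).1)
      map_one' := by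
        have : r 1 = 1 := hinj _ (hrH 1) 1 H.one_mem (by simp [hr2])
        simp [this]
      map_mul' := fun p q => by
        simp [rmul, Prod.fst_mul, map_mul, Subgroup.coe_mul, Prod.ext_iff] }
  let Δ : Subgroup (Q × Q) :=
    { carrier := {q | q.1 = q.2}
      one_mem' := rfl
      mul_mem' := by
        rintro a b (ha : a.1 = a.2) (hb : b.1 = b.2)
        show (a * b).1 = (a * b).2
        simp [Prod.fst_mul, Prod.snd_mul, ha, hb]
      inv_mem' := by
        rintro a (ha : a.1 = a.2)
        show a⁻¹.1 = a⁻¹.2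
        simp [ha] }
  have hVeq : V.subgroupOf P = Δ.comap ψ := by
    ext p
    constructor
    · rintro ⟨h, hh, hh2, hhφ⟩
      have heq : h = r p := hinj _ hh _ (hrH p) (hh2.trans (hr2 p).symm)
      exact hhφ.trans (congrArg (fun z => φ z.1) heq)
    · intro hp
      exact ⟨r p, hrH p, hr2 p, hp⟩
  rw [hVeq]
  constructor
  rw [Subgroup.index_comap]
  exact (Subgroup.finiteIndex_of_finite (H := Δ.subgroupOf ψ.range)).index_ne_zero
end

section
/- Let G be a group, H ≤ G, and suppose there is a finite-index normal subgroup V of G with H ≤ V such that H is separable in V. Then H is separable in G. -/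
theorem stmt15 {G : Type*} [Group G] (V H : Subgroup G) [V.Normal]
    (hfi : V.FiniteIndex) (hHV : H ≤ V)
    (hsep : SubgroupSeparable (H.subgroupOf V)) :
    SubgroupSeparable H := by
  intro g hg
  by_cases hgV : g ∈ V
  · obtain ⟨K, hKfi, hHK, hgK⟩ := hsep ⟨g, hgV⟩ (by simpa [Subgroup.mem_subgroupOf] using hg)
    refine ⟨K.map V.subtype, ?_, ?_, ?_⟩
    · constructor
      have hle : K.map V.subtype ≤ V := by
        rintro x ⟨y, _, rfl⟩; exact y.2
      have := Subgroup.relIndex_mul_index hle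
      have hrel : (K.map V.subtype).relIndex V = K.index := by
        rw [Subgroup.relIndex, Subgroup.subgroupOf,
          Subgroup.comap_map_eq_self_of_injective V.subtype_injective]
      rw [hrel] at this
      rw [← this]
      exact mul_ne_zero hKfi.index_ne_zero hfi.index_ne_zero
    · intro x hx
      exact ⟨⟨x, hHV hx⟩, hHK (by simpa [Subgroup.mem_subgroupOf] using hx), rfl⟩
    · rintro ⟨y, hy, hyg⟩
      apply hgK
      have : y = ⟨g, hgV⟩ := Subtype.ext hyg
      rwa [this] at hy
  · exact ⟨V, hfi, hHV, hgV⟩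
end
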